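/- For every real x > 0, the exponential integral satisfies E₁(x) = ∫_x^∞ e^{-t}/t dt = −log x − γ + Σ_{n=1}^∞ (−1)^{n−1} x^{n}/(n · n!), where γ is the Euler–Mascheroni constant. -/

import Mathlib

open Real MeasureTheory Set Filter Topology


lemma aux_int_div {x : ℝ} (hx : 0 < x) :
    IntegrableOn (fun t => Real.exp (-t) / t) (Set.Ioi x) := by
  have hexp : IntegrableOn (fun t : ℝ => Real.exp (-t) * x⁻¹) (Set.Ioi x) := by
    have := (exp_neg_integrableOn_Ioi x one_pos).mul_const x⁻¹
    simpa [IntegrableOn] using this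
  apply hexp.mono' ((ContinuousOn.aestronglyMeasurable ?_ measurableSet_Ioi))
  · filter_upwards [ae_restrict_mem measurableSet_Ioi] with t ht
    rw [norm_div, Real.norm_eq_abs, Real.norm_eq_abs, abs_of_pos (exp_pos _),
      abs_of_pos (hx.trans ht), div_eq_mul_inv]
    gcongr
    exact le_of_lt ht
  · exact (Real.continuous_exp.comp continuous_neg).continuousOn.div continuousOn_id
      (fun t ht => (hx.trans ht).ne')

lemma aux_int_log_exp : IntegrableOn (fun t => Real.exp (-t) * Real.log t) (Set.Ioi (0:ℝ)) := by
  have h1 : IntegrableOn (fun t : ℝ => -Real.log t) (Set.Ioc (0:ℝ) 1) := by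
    apply intervalIntegral.integrableOn_deriv_of_nonneg
      (g := fun t : ℝ => t - t * Real.log t)
      (continuous_id.continuousOn.sub Real.continuous_mul_log.continuousOn)
    · intro t ht
      have h := ((hasDerivAt_id t).mul (Real.hasDerivAt_log ht.1.ne'))
      have h2 : HasDerivAt (fun t : ℝ => t - t * Real.log t)
          (1 - (1 * Real.log t + t * t⁻¹)) t := (hasDerivAt_id t).sub h
      convert h2 using 1
      rw [one_mul, mul_inv_cancel₀ ht.1.ne']
      ring
    · intro t ht
      simp only [neg_nonneg]
      exact Real.log_nonpos ht.1.le (le_of_lt ht.2)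
  have hmeas : ∀ s : Set ℝ, MeasurableSet s → s ⊆ Set.Ioi 0 →
      AEStronglyMeasurable (fun t => Real.exp (-t) * Real.log t) (volume.restrict s) := by
    intro s hs hsub
    apply ContinuousOn.aestronglyMeasurable ?_ hs
    exact ((Real.continuous_exp.comp continuous_neg).continuousOn).mul
      (Real.continuousOn_log.mono (fun t ht => ne_of_gt (hsub ht)))
  have hpart1 : IntegrableOn (fun t => Real.exp (-t) * Real.log t) (Set.Ioc (0:ℝ) 1) := by
    apply h1.mono' (hmeas _ measurableSet_Ioc Ioc_subset_Ioi_self)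
    filter_upwards [ae_restrict_mem measurableSet_Ioc] with t ht
    rw [norm_mul, Real.norm_eq_abs, Real.norm_eq_abs, abs_of_pos (exp_pos _),
      abs_of_nonpos (Real.log_nonpos ht.1.le ht.2)]
    calc Real.exp (-t) * -Real.log t ≤ 1 * -Real.log t := by
          apply mul_le_mul_of_nonneg_right _ (by simpa using Real.log_nonpos ht.1.le ht.2)
          exact Real.exp_le_one_iff.mpr (by linarith [ht.1])
      _ = -Real.log t := one_mul _
  have hpart2 : IntegrableOn (fun t => Real.exp (-t) * Real.log t) (Set.Ioi (1:ℝ)) := by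
    have hG : IntegrableOn (fun t : ℝ => Real.exp (-t) * t ^ ((2:ℝ) - 1)) (Set.Ioi (0:ℝ)) :=
      Real.GammaIntegral_convergent (by norm_num)
    apply ((hG.mono_set (Ioi_subset_Ioi zero_le_one))).mono'
      (hmeas _ measurableSet_Ioi (Ioi_subset_Ioi zero_le_one))
    filter_upwards [ae_restrict_mem measurableSet_Ioi] with t ht
    have ht1 : (1:ℝ) < t := ht
    rw [norm_mul, Real.norm_eq_abs, Real.norm_eq_abs, abs_of_pos (exp_pos _),
      abs_of_nonneg (Real.log_nonneg ht1.le)]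
    have : t ^ ((2:ℝ) - 1) = t := by
      norm_num
    rw [this]
    have hlog : Real.log t ≤ t := (Real.log_le_sub_one_of_pos (by linarith)).trans (by linarith)
    exact mul_le_mul_of_nonneg_left hlog (exp_pos _).le
  have := hpart1.union hpart2
  rwa [Set.Ioc_union_Ioi_eq_Ioi zero_le_one] at this


lemma aux_gamma : ∫ t in Set.Ioi (0:ℝ), Real.exp (-t) * Real.log t
    = -Real.eulerMascheroniConstant := by
  have h1 : HasDerivAt Complex.Gamma (-(Real.eulerMascheroniConstant : ℂ)) 1 := by
    exact_mod_cast Complex.hasDerivAt_Gamma_one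
  have h2 := Complex.hasDerivAt_GammaIntegral (s := 1) (by norm_num)
  have heq : Complex.Gamma =ᶠ[nhds (1:ℂ)] Complex.GammaIntegral := by
    have hopen : IsOpen {s : ℂ | 0 < s.re} := isOpen_lt continuous_const Complex.continuous_re
    filter_upwards [hopen.mem_nhds (by norm_num : (0:ℝ) < (1:ℂ).re)] with s hs
    exact Complex.Gamma_eq_integral hs
  have h3 : HasDerivAt Complex.Gamma
      (∫ t : ℝ in Set.Ioi 0, (t:ℂ) ^ ((1:ℂ) - 1) * (Real.log t * Real.exp (-t))) 1 :=
    h2.congr_of_eventuallyEq heq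
  have h4 := h3.unique h1
  have h5 : (∫ t : ℝ in Set.Ioi 0, (t:ℂ) ^ ((1:ℂ) - 1) * (Real.log t * Real.exp (-t)))
      = ((∫ t in Set.Ioi (0:ℝ), Real.exp (-t) * Real.log t : ℝ) : ℂ) := by
    calc (∫ t : ℝ in Set.Ioi 0, (t:ℂ) ^ ((1:ℂ) - 1) * (Real.log t * Real.exp (-t)))
        = ∫ t in Set.Ioi (0:ℝ), ((Real.exp (-t) * Real.log t : ℝ) : ℂ) := by
          apply setIntegral_congr_fun measurableSet_Ioi
          intro t ht
          push_cast
          rw [sub_self, Complex.cpow_zero, one_mul, mul_comm]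
      _ = ((∫ t in Set.Ioi (0:ℝ), Real.exp (-t) * Real.log t : ℝ) : ℂ) := by
          have := integral_ofReal (𝕜 := ℂ) (f := fun t : ℝ => Real.exp (-t) * Real.log t)
            (μ := volume.restrict (Set.Ioi 0))
          simpa using this
  rw [h5] at h4
  exact_mod_cast h4



lemma aux_exp_deriv (t : ℝ) : HasDerivAt (fun s : ℝ => Real.exp (-s)) (-Real.exp (-t)) t := by
  have := (Real.hasDerivAt_exp (-t)).comp t (hasDerivAt_neg t)
  simpa [mul_comm, Function.comp_def] using this

lemma aux_deriv1 {t : ℝ} (ht : 0 < t) :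
    HasDerivAt (fun s : ℝ => -(Real.exp (-s) * Real.log s))
      (Real.exp (-t) * Real.log t - Real.exp (-t) / t) t := by
  have h := ((aux_exp_deriv t).mul (Real.hasDerivAt_log ht.ne')).neg
  exact h.congr_deriv (by ring)

lemma aux_deriv2 {t : ℝ} (ht : 0 < t) :
    HasDerivAt (fun s : ℝ => -((Real.exp (-s) - 1) * Real.log s))
      (Real.exp (-t) * Real.log t - (Real.exp (-t) - 1) / t) t := by
  have h := ((((aux_exp_deriv t).sub_const 1)).mul (Real.hasDerivAt_log ht.ne')).neg
  exact h.congr_deriv (by ring)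

lemma aux_ibp1 {x : ℝ} (hx : 0 < x) :
    ∫ t in Set.Ioi x, (Real.exp (-t) * Real.log t - Real.exp (-t) / t)
      = Real.exp (-x) * Real.log x := by
  have key := integral_Ioi_of_hasDerivAt_of_tendsto'
    (f := fun t : ℝ => -(Real.exp (-t) * Real.log t))
    (f' := fun t : ℝ => Real.exp (-t) * Real.log t - Real.exp (-t) / t) (a := x) (m := 0)
    (fun t ht => aux_deriv1 (hx.trans_le ht))
    ((aux_int_log_exp.mono_set (Set.Ioi_subset_Ioi hx.le)).sub (aux_int_div hx))
    ?_
  · rw [key]; ring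
  · apply squeeze_zero_norm' ?_ (tendsto_pow_mul_exp_neg_atTop_nhds_zero 1)
    filter_upwards [eventually_ge_atTop (1:ℝ)] with t ht
    rw [norm_neg, norm_mul, Real.norm_eq_abs, Real.norm_eq_abs, abs_of_pos (exp_pos _),
      abs_of_nonneg (Real.log_nonneg ht), pow_one, mul_comm (t : ℝ)]
    apply mul_le_mul_of_nonneg_left _ (exp_pos _).le
    exact (Real.log_le_sub_one_of_pos (by linarith)).trans (by linarith)

lemma aux_ibp2 {x : ℝ} (hx : 0 < x) :
    ∫ t in (0:ℝ)..x, (Real.exp (-t) * Real.log t - (Real.exp (-t) - 1) / t)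
      = -((Real.exp (-x) - 1) * Real.log x) := by
  have hone : ∀ t ∈ Set.Ioc (0:ℝ) x, ‖(Real.exp (-t) - 1) / t‖ ≤ 1 := by
    intro t ht
    rw [norm_div, Real.norm_eq_abs, Real.norm_eq_abs, abs_of_pos ht.1,
      abs_of_nonpos (by simp [Real.exp_le_one_iff.mpr (by linarith [ht.1] : -t ≤ 0)])]
    rw [div_le_one ht.1, neg_sub]
    have := Real.add_one_le_exp (-t)
    linarith
  have hint2 : IntegrableOn (fun t : ℝ => (Real.exp (-t) - 1) / t) (Set.Ioc 0 x) := by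
    apply Integrable.mono' (integrable_const (1:ℝ))
    · apply ContinuousOn.aestronglyMeasurable ?_ measurableSet_Ioc
      exact (((Real.continuous_exp.comp continuous_neg).sub continuous_const).continuousOn).div
        continuousOn_id (fun t ht => ht.1.ne')
    · filter_upwards [ae_restrict_mem measurableSet_Ioc] with t ht using hone t ht
  have key := intervalIntegral.integral_eq_sub_of_hasDerivAt_of_tendsto (a := 0) (b := x) hx
    (f := fun t : ℝ => -((Real.exp (-t) - 1) * Real.log t))
    (f' := fun t : ℝ => Real.exp (-t) * Real.log t - (Real.exp (-t) - 1) / t)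
    (fa := 0) (fb := -((Real.exp (-x) - 1) * Real.log x))
    (fun t ht => aux_deriv2 ht.1) ?_ ?_ ?_
  · rw [key]; ring
  · rw [intervalIntegrable_iff_integrableOn_Ioc_of_le hx.le]
    exact (aux_int_log_exp.mono_set Set.Ioc_subset_Ioi_self).sub hint2
  · -- limit at 0⁺
    apply squeeze_zero_norm' ?_ (by simpa only [rpow_one, abs_zero] using (tendsto_log_mul_rpow_nhdsGT_zero one_pos).abs)
    filter_upwards [self_mem_nhdsWithin] with t ht
    have ht0 : (0:ℝ) < t := ht
    show ‖-((Real.exp (-t) - 1) * Real.log t)‖ ≤ |Real.log t * t|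
    rw [norm_neg, norm_mul, Real.norm_eq_abs, Real.norm_eq_abs]
    have h1 : |Real.exp (-t) - 1| ≤ t := by
      rw [abs_of_nonpos (by simp [Real.exp_le_one_iff.mpr (by linarith : -t ≤ 0)])]
      have := Real.add_one_le_exp (-t)
      linarith
    calc |Real.exp (-t) - 1| * |Real.log t| ≤ t * |Real.log t| := by
          exact mul_le_mul_of_nonneg_right h1 (abs_nonneg _)
      _ = |Real.log t * t| := by
          rw [abs_mul, abs_of_pos ht0]; ring
  · -- limit at x⁻
    exact (aux_deriv2 hx).continuousAt.tendsto.mono_left nhdsWithin_le_nhds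

lemma aux_int2 {x : ℝ} (hx : 0 < x) :
    IntegrableOn (fun t : ℝ => (Real.exp (-t) - 1) / t) (Set.Ioc 0 x) := by
  apply Integrable.mono' (integrable_const (1:ℝ))
  · apply ContinuousOn.aestronglyMeasurable ?_ measurableSet_Ioc
    exact (((Real.continuous_exp.comp continuous_neg).sub continuous_const).continuousOn).div
      continuousOn_id (fun t ht => ht.1.ne')
  · filter_upwards [ae_restrict_mem measurableSet_Ioc] with t ht
    rw [norm_div, Real.norm_eq_abs, Real.norm_eq_abs, abs_of_pos ht.1,
      abs_of_nonpos (by simp [Real.exp_le_one_iff.mpr (by linarith [ht.1] : -t ≤ 0)])]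
    rw [div_le_one ht.1, neg_sub]
    have := Real.add_one_le_exp (-t)
    linarith


lemma aux_exp_series {t : ℝ} (ht : t ≠ 0) :
    (1 - Real.exp (-t)) / t = ∑' n : ℕ, (-1:ℝ)^n * t^n / ((n+1).factorial : ℝ) := by
  have hsum : Summable (fun n : ℕ => (-t)^n / (n.factorial : ℝ)) :=
    Real.summable_pow_div_factorial (-t)
  have hexp : Real.exp (-t) = ∑' n : ℕ, (-t)^n / (n.factorial : ℝ) := by
    rw [Real.exp_eq_exp_ℝ, NormedSpace.exp_eq_tsum_div]
  have hsplit : (∑' n : ℕ, (-t)^n / (n.factorial : ℝ))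
      = 1 + ∑' n : ℕ, (-t)^(n+1) / ((n+1).factorial : ℝ) := by
    rw [hsum.tsum_eq_zero_add]
    norm_num
  have h1 : 1 - Real.exp (-t) = ∑' n : ℕ, (-1:ℝ)^n * t^(n+1) / ((n+1).factorial : ℝ) := by
    rw [hexp, hsplit]
    rw [show (1:ℝ) - (1 + ∑' n : ℕ, (-t)^(n+1) / ((n+1).factorial : ℝ))
      = ∑' n : ℕ, -((-t)^(n+1) / ((n+1).factorial : ℝ)) by rw [tsum_neg]; ring]
    apply tsum_congr
    intro n
    have : (-t)^(n+1) = -((-1:ℝ)^n * t^(n+1)) := by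
      rw [neg_pow, pow_succ]
      ring
    rw [this]
    ring
  rw [h1, ← tsum_div_const]
  apply tsum_congr
  intro n
  rw [pow_succ]
  field_simp

lemma aux_series {x : ℝ} (hx : 0 < x) :
    ∑' n : ℕ, (-1 : ℝ) ^ n * x ^ (n + 1) / ((n + 1) * ((n + 1).factorial : ℝ))
      = ∫ t in Set.Ioc (0:ℝ) x, (1 - Real.exp (-t)) / t := by
  set F : ℕ → ℝ → ℝ := fun n t => (-1:ℝ)^n * t^n / ((n+1).factorial : ℝ) with hF
  have hcont : ∀ n, Continuous (F n) := by
    intro n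
    exact ((continuous_const.mul (continuous_pow n)).div_const _)
  have hFint : ∀ n, Integrable (F n) (volume.restrict (Set.Ioc (0:ℝ) x)) := fun n =>
    (hcont n).integrableOn_Ioc
  have hIpow : ∀ n : ℕ, ∫ t in Set.Ioc (0:ℝ) x, t ^ n = x ^ (n+1) / (n+1) := by
    intro n
    rw [← intervalIntegral.integral_of_le hx.le, integral_pow]
    norm_num
  have hIF : ∀ n : ℕ, ∫ t in Set.Ioc (0:ℝ) x, F n t
      = (-1:ℝ)^n * x^(n+1) / ((n+1) * ((n+1).factorial : ℝ)) := by
    intro n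
    simp only [hF]
    rw [integral_div, integral_const_mul, hIpow]
    field_simp
  have hnorm : ∀ n : ℕ, ∫ t in Set.Ioc (0:ℝ) x, ‖F n t‖
      = x^(n+1) / ((n+1) * ((n+1).factorial : ℝ)) := by
    intro n
    have : ∀ t ∈ Set.Ioc (0:ℝ) x, ‖F n t‖ = t ^ n / ((n+1).factorial : ℝ) := by
      intro t ht
      simp only [hF]
      rw [norm_div, norm_mul, Real.norm_eq_abs, Real.norm_eq_abs, Real.norm_eq_abs,
        abs_pow, abs_pow, abs_neg, abs_one, one_pow, one_mul, abs_of_pos ht.1,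
        abs_of_pos (by positivity : (0:ℝ) < ((n+1).factorial : ℝ))]
    rw [setIntegral_congr_fun measurableSet_Ioc this, integral_div, hIpow]
    field_simp
  have hsumm : Summable fun n : ℕ => ∫ t in Set.Ioc (0:ℝ) x, ‖F n t‖ := by
    simp_rw [hnorm]
    apply Summable.of_nonneg_of_le (fun n => by positivity)
      (f := fun n : ℕ => x^(n+1) / ((n+1).factorial : ℝ)) ?_ ?_
    · intro n
      apply div_le_div_of_nonneg_left (by positivity) (by positivity)
      have h1 : (1:ℝ) ≤ ((n+1).factorial : ℝ) :=
        Nat.one_le_cast.mpr (Nat.one_le_iff_ne_zero.mpr (Nat.factorial_ne_zero _))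
      nlinarith [(by positivity : (0:ℝ) < ((n:ℝ)+1))]
    · exact ((Real.summable_pow_div_factorial x).comp_injective (add_left_injective 1)).congr
        (by intro n; simp)
  have hkey := MeasureTheory.integral_tsum_of_summable_integral_norm hFint hsumm
  have hrepl : ∫ t in Set.Ioc (0:ℝ) x, (1 - Real.exp (-t)) / t
      = ∫ a in Set.Ioc (0:ℝ) x, ∑' i, F i a :=
    setIntegral_congr_fun measurableSet_Ioc (fun t ht => aux_exp_series ht.1.ne')
  rw [hrepl, ← hkey]
  apply tsum_congr
  intro n
  rw [hIF]



theorem expIntegral_eq_log_add_series (x : ℝ) (hx : 0 < x) :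
    ∫ t in Set.Ioi x, Real.exp (-t) / t
      = -Real.log x - Real.eulerMascheroniConstant
        + ∑' n : ℕ, (-1 : ℝ) ^ n * x ^ (n + 1) / ((n + 1) * ((n + 1).factorial : ℝ)) := by
  have hlogIoi : IntegrableOn (fun t => Real.exp (-t) * Real.log t) (Set.Ioi x) :=
    aux_int_log_exp.mono_set (Set.Ioi_subset_Ioi hx.le)
  have hlogIoc : IntegrableOn (fun t => Real.exp (-t) * Real.log t) (Set.Ioc 0 x) :=
    aux_int_log_exp.mono_set Set.Ioc_subset_Ioi_self
  -- key1 : A - B = exp(-x) log x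
  have key1 : (∫ t in Set.Ioi x, Real.exp (-t) * Real.log t)
      - (∫ t in Set.Ioi x, Real.exp (-t) / t) = Real.exp (-x) * Real.log x := by
    rw [← integral_sub hlogIoi (aux_int_div hx)]
    exact aux_ibp1 hx
  -- key2 : C - D = -((exp(-x)-1) log x)
  have key2 : (∫ t in Set.Ioc (0:ℝ) x, Real.exp (-t) * Real.log t)
      - (∫ t in Set.Ioc (0:ℝ) x, (Real.exp (-t) - 1) / t)
      = -((Real.exp (-x) - 1) * Real.log x) := by
    rw [← integral_sub hlogIoc (aux_int2 hx)]
    rw [← intervalIntegral.integral_of_le hx.le]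
    exact aux_ibp2 hx
  -- split : C + A = -γ
  have hsplit : (∫ t in Set.Ioc (0:ℝ) x, Real.exp (-t) * Real.log t)
      + (∫ t in Set.Ioi x, Real.exp (-t) * Real.log t)
      = -Real.eulerMascheroniConstant := by
    rw [← aux_gamma, ← Set.Ioc_union_Ioi_eq_Ioi hx.le]
    exact (setIntegral_union (Set.Ioc_disjoint_Ioi le_rfl) measurableSet_Ioi
      hlogIoc hlogIoi).symm
  -- series : S = -D
  have hS : ∑' n : ℕ, (-1 : ℝ) ^ n * x ^ (n + 1) / ((n + 1) * ((n + 1).factorial : ℝ))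
      = -(∫ t in Set.Ioc (0:ℝ) x, (Real.exp (-t) - 1) / t) := by
    rw [aux_series hx, ← integral_neg]
    apply setIntegral_congr_fun measurableSet_Ioc
    intro t ht
    show (1 - Real.exp (-t)) / t = -((Real.exp (-t) - 1) / t)
    rw [← neg_div, neg_sub]
  have hxlog : Real.exp (-x) * Real.log x - (exp (-x) - 1) * Real.log x = Real.log x := by ring
  rw [hS]
  linarith [key1, key2, hsplit]
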